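/- If a closed convex cone K in a finite-dimensional Euclidean space E is strongly tangentially exposed (i.e., K and all of its lexicographic tangent cones are tangentially exposed), then K is facially dual complete: K* + F^⊥ is closed for every proper face F of K. -/

import Mathlib

/- Common definitions following "Facially Dual Complete (Nice) cones and
lexicographic tangents" by V. Roshchina and L. Tunçel. -/

open Set Filter
open scoped Pointwise

local notation "⟪" x ", " y "⟫" => @inner ℝ _ _ x y

variable {E : Type*} [NormedAddCommGroup E] [InnerProductSpace ℝ E]

/-- The tangent cone to a set `C` at `x`: the closure of the cone of feasible
directions `{d : x + ε • d ∈ C for some ε > 0}`. -/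
def TangCone (x : E) (C : Set E) : Set E :=
  closure {d : E | ∃ ε : ℝ, 0 < ε ∧ x + ε • d ∈ C}

/-- `F` is a face of the convex set `C`: a closed convex subset such that any open
segment of `C` whose interior meets `F` has both endpoints in `F`. -/
def IsFaceOf (F C : Set E) : Prop :=
  F ⊆ C ∧ Convex ℝ F ∧ IsClosed F ∧
    ∀ x ∈ F, ∀ y ∈ C, ∀ z ∈ C, x ∈ openSegment ℝ y z → y ∈ F ∧ z ∈ F

/-- A proper face: a nonempty face different from the whole set. -/
def IsProperFaceOf (F C : Set E) : Prop := IsFaceOf F C ∧ F.Nonempty ∧ F ≠ C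

/-- The dual cone `K* = {s : ⟨s,x⟩ ≥ 0 for all x ∈ K}`. -/
def DualCone' (K : Set E) : Set E := {s : E | ∀ x ∈ K, 0 ≤ ⟪s, x⟫}

/-- `F^⊥ = {s : ⟨s,x⟩ = 0 for all x ∈ F}`. -/
def PerpOf (F : Set E) : Set E := {s : E | ∀ x ∈ F, ⟪s, x⟫ = 0}

/-- Facial dual completeness: `K* + F^⊥` is closed for every proper face `F` of `K`. -/
def IsFDC (K : Set E) : Prop :=
  ∀ F : Set E, IsProperFaceOf F K → IsClosed (DualCone' K + PerpOf F)

/-- Tangential exposure: `T(x;C) ∩ span F = T(x;F)` for every proper face `F` and `x ∈ F`. -/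
def TangentiallyExposed (C : Set E) : Prop :=
  ∀ F : Set E, IsProperFaceOf F C → ∀ x ∈ F,
    TangCone x C ∩ (Submodule.span ℝ F : Set E) = TangCone x F

/-- The family of all tangent cones of members of a family of sets. -/
def TangFamily (𝒦 : Set (Set E)) : Set (Set E) :=
  {T | ∃ C ∈ 𝒦, ∃ x ∈ C, T = TangCone x C}

/-- `𝒯^k(C)`: the `k`-fold iterated tangent-cone families of `C`;
its members are the lexicographic tangent cones (of order `k`) of `C`. -/
def TangIter (C : Set E) : ℕ → Set (Set E)
  | 0 => {C}
  | k + 1 => TangFamily (TangIter C k)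

/-- Strong tangential exposure: `C` and all of its lexicographic tangent cones are
tangentially exposed. -/
def StronglyTangentiallyExposed (C : Set E) : Prop :=
  ∀ k : ℕ, ∀ T ∈ TangIter C k, TangentiallyExposed T

/-- `F` is an exposed face of `C`: the set of maximizers over `C` of some linear functional. -/
def IsExposedFaceOf (F C : Set E) : Prop :=
  ∃ p : E, F = {x ∈ C | ∀ y ∈ C, ⟪p, y⟫ ≤ ⟪p, x⟫}

/-- `C` is facially exposed: every proper face of `C` is exposed. -/
def FaciallyExposed (C : Set E) : Prop :=
  ∀ F : Set E, IsProperFaceOf F C → IsExposedFaceOf F C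

/-- The normal cone to `C` at `x`. -/
def NormalCone' (x : E) (C : Set E) : Set E := {s : E | ∀ y ∈ C, ⟪s, y - x⟫ ≤ 0}

/-- The minimal face of `C` containing `S`. -/
def MinimalFace (S C : Set E) : Set E := ⋂₀ {F : Set E | IsFaceOf F C ∧ S ⊆ F}

/-- `K` is a cone: closed under positive scalar multiplication. -/
def IsConeSet (K : Set E) : Prop := ∀ c : ℝ, 0 < c → ∀ x ∈ K, c • x ∈ K

namespace Aux

/-- Feasible directions. -/
def Feas (x : E) (C : Set E) : Set E := {d : E | ∃ ε : ℝ, 0 < ε ∧ x + ε • d ∈ C}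

lemma tangCone_eq (x : E) (C : Set E) : TangCone x C = closure (Feas x C) := rfl

lemma add_mem_cone {Q : Set E} (hconv : Convex ℝ Q) (hcone : IsConeSet Q)
    {a b : E} (ha : a ∈ Q) (hb : b ∈ Q) : a + b ∈ Q := by
  have h := hconv ha hb (by norm_num : (0:ℝ) ≤ (1/2:ℝ)) (by norm_num : (0:ℝ) ≤ (1/2:ℝ)) (by norm_num)
  have h2 := hcone 2 (by norm_num) _ h
  rw [smul_add, smul_smul, smul_smul] at h2
  norm_num at h2
  exact h2

lemma smul_mem_cone {Q : Set E} (hcone : IsConeSet Q) (h0 : (0:E) ∈ Q)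
    {c : ℝ} (hc : 0 ≤ c) {a : E} (ha : a ∈ Q) : c • a ∈ Q := by
  rcases eq_or_lt_of_le hc with h | h
  · simpa [← h] using h0
  · exact hcone c h a ha

lemma sum_smul_mem_cone {Q : Set E} (hconv : Convex ℝ Q) (hcone : IsConeSet Q) (h0 : (0:E) ∈ Q)
    {ι : Type*} (t : Finset ι) (c : ι → ℝ) (a : ι → E)
    (hc : ∀ i ∈ t, 0 ≤ c i) (ha : ∀ i ∈ t, a i ∈ Q) :
    (∑ i ∈ t, c i • a i) ∈ Q := by
  classical
  induction t using Finset.induction_on with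
  | empty => simpa using h0
  | insert _ _ hni ih =>
      rename_i j tt
      rw [Finset.sum_insert hni]
      exact add_mem_cone hconv hcone
        (smul_mem_cone hcone h0 (hc j (Finset.mem_insert_self j tt))
          (ha j (Finset.mem_insert_self j tt)))
        (ih (fun i hi => hc i (Finset.mem_insert_of_mem hi))
            (fun i hi => ha i (Finset.mem_insert_of_mem hi)))

section TangBasics

variable {Q : Set E} {x : E}

lemma feas_subset_tangCone : Feas x Q ⊆ TangCone x Q := subset_closure

lemma tangCone_isClosed : IsClosed (TangCone x Q) := isClosed_closure

lemma feas_convex (hconv : Convex ℝ Q) (hx : x ∈ Q) : Convex ℝ (Feas x Q) := by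
  rintro d₁ hd₁ d₂ hd₂ p q hp hq hpq
  rcases hd₁ with ⟨ε₁, hε₁, h₁⟩
  rcases hd₂ with ⟨ε₂, hε₂, h₂⟩
  have key : ∀ d : E, ∀ ε₀ ε : ℝ, 0 < ε → ε ≤ ε₀ → 0 < ε₀ → x + ε₀ • d ∈ Q → x + ε • d ∈ Q := by
    intro d ε₀ ε hε hle hε₀ hmem
    have hc1 : ε / ε₀ ≤ 1 := (div_le_one hε₀).mpr hle
    have hmul : ε / ε₀ * ε₀ = ε := div_mul_cancel₀ _ hε₀.ne'
    have heq : x + ε • d = (1 - ε/ε₀) • x + (ε/ε₀) • (x + ε₀ • d) := by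
      rw [smul_add, smul_smul, hmul]
      module
    rw [heq]
    exact hconv hx hmem (by linarith) (by positivity) (by ring)
  set ε := min ε₁ ε₂ with hε
  have hεpos : 0 < ε := lt_min hε₁ hε₂
  refine ⟨ε, hεpos, ?_⟩
  have m₁ : x + ε • d₁ ∈ Q := key d₁ ε₁ ε hεpos (min_le_left _ _) hε₁ h₁
  have m₂ : x + ε • d₂ ∈ Q := key d₂ ε₂ ε hεpos (min_le_right _ _) hε₂ h₂
  have := hconv m₁ m₂ hp hq hpq
  have hx1 : (p + q) • x = x := by rw [hpq, one_smul]
  have heq : p • (x + ε • d₁) + q • (x + ε • d₂) = (p + q) • x + ε • (p • d₁ + q • d₂) := by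
    module
  rw [heq, hx1] at this
  exact this

lemma feas_cone (hcone : IsConeSet Q) : IsConeSet (Feas x Q) := by
  rintro c hc d ⟨ε, hε, hmem⟩
  exact ⟨ε / c, by positivity, by rwa [smul_smul, div_mul_cancel₀ _ (ne_of_gt hc)]⟩

lemma zero_mem_feas (hx : x ∈ Q) : (0:E) ∈ Feas x Q := ⟨1, one_pos, by simpa using hx⟩

lemma tangCone_convex (hconv : Convex ℝ Q) (hx : x ∈ Q) : Convex ℝ (TangCone x Q) :=
  (feas_convex hconv hx).closure

lemma tangCone_cone (hcone : IsConeSet Q) : IsConeSet (TangCone x Q) := by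
  intro c hc d hd
  have : Continuous fun y : E => c • y := continuous_const_smul c
  have := map_mem_closure this hd (fun y hy => feas_cone hcone c hc y hy)
  exact this

lemma zero_mem_tangCone (hx : x ∈ Q) : (0:E) ∈ TangCone x Q :=
  subset_closure (zero_mem_feas hx)

lemma subset_feas (hconv : Convex ℝ Q) (hcone : IsConeSet Q) (hx : x ∈ Q) : Q ⊆ Feas x Q := by
  intro q hq
  exact ⟨1, one_pos, by simpa using add_mem_cone hconv hcone hx hq⟩

lemma subset_tangCone (hconv : Convex ℝ Q) (hcone : IsConeSet Q) (hx : x ∈ Q) :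
    Q ⊆ TangCone x Q := (subset_feas hconv hcone hx).trans subset_closure

lemma neg_base_mem_feas (hcone : IsConeSet Q) (hx : x ∈ Q) : -x ∈ Feas x Q := by
  refine ⟨1/2, by norm_num, ?_⟩
  have : x + (1/2 : ℝ) • (-x) = (1/2 : ℝ) • x := by module
  rw [this]
  exact hcone _ (by norm_num) _ hx

lemma base_mem_feas (hcone : IsConeSet Q) (hx : x ∈ Q) : x ∈ Feas x Q := by
  refine ⟨1, one_pos, ?_⟩
  have : x + (1:ℝ) • x = (2:ℝ) • x := by module
  rw [this]
  exact hcone _ (by norm_num) _ hx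

lemma feas_subset_span (hx : x ∈ Q) : Feas x Q ⊆ (Submodule.span ℝ Q : Set E) := by
  rintro d ⟨ε, hε, hmem⟩
  have h1 : (x + ε • d) ∈ Submodule.span ℝ Q := Submodule.subset_span hmem
  have h2 : x ∈ Submodule.span ℝ Q := Submodule.subset_span hx
  have : ε • d ∈ Submodule.span ℝ Q := by
    have := Submodule.sub_mem _ h1 h2
    simpa using this
  have := Submodule.smul_mem _ (ε⁻¹) this
  rwa [smul_smul, inv_mul_cancel₀ (ne_of_gt hε), one_smul] at this

lemma tangCone_subset_span [FiniteDimensional ℝ E] (hx : x ∈ Q) :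
    TangCone x Q ⊆ (Submodule.span ℝ Q : Set E) := by
  have : IsClosed ((Submodule.span ℝ Q : Submodule ℝ E) : Set E) :=
    Submodule.closed_of_finiteDimensional _
  exact closure_minimal (feas_subset_span hx) this

end TangBasics

section Chunk2

variable {Q D A : Set E}

/-- Finite spanning subset inside a set. -/
lemma exists_finset_subset_span [FiniteDimensional ℝ E] (D : Set E) :
    ∃ S : Finset E, ↑S ⊆ D ∧ Submodule.span ℝ D ≤ Submodule.span ℝ (S : Set E) := by
  classical
  have hfg : (Submodule.span ℝ D).FG := IsNoetherian.noetherian _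
  rcases hfg with ⟨X, hX⟩
  have hmem : ∀ x ∈ X, ∃ T : Finset E, ↑T ⊆ D ∧ x ∈ Submodule.span ℝ (T : Set E) := by
    intro x hx
    have : x ∈ Submodule.span ℝ D := by
      rw [← hX]; exact Submodule.subset_span hx
    exact Submodule.mem_span_finite_of_mem_span this
  choose T hT₁ hT₂ using hmem
  refine ⟨X.attach.biUnion (fun x => T x.1 x.2), ?_, ?_⟩
  · intro a ha
    simp only [Finset.coe_biUnion, Set.mem_iUnion, Finset.mem_coe] at ha
    rcases ha with ⟨x, hx, ha⟩
    exact hT₁ x.1 x.2 ha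
  · rw [← hX]
    rw [Submodule.span_le]
    intro x hx
    have := hT₂ x hx
    have hsub : (T x hx : Set E) ⊆ (X.attach.biUnion (fun x => T x.1 x.2) : Finset E) := by
      intro a ha
      simp only [Finset.coe_biUnion, Set.mem_iUnion, Finset.mem_coe]
      exact ⟨⟨x, hx⟩, Finset.mem_attach _ _, ha⟩
    exact Submodule.span_mono hsub this

/-- Core point of a convex cone. -/
lemma exists_core_point [FiniteDimensional ℝ E] (hconv : Convex ℝ D) (hcone : IsConeSet D)
    (h0 : (0:E) ∈ D) :
    ∃ z ∈ D, ∀ w ∈ Submodule.span ℝ D, ∃ δ : ℝ, 0 < δ ∧ z + δ • w ∈ D := by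
  classical
  obtain ⟨S, hSD, hSspan⟩ := exists_finset_subset_span D
  refine ⟨∑ a ∈ S, a, ?_, ?_⟩
  · have := Aux.sum_smul_mem_cone hconv hcone h0 S (fun _ => (1:ℝ)) id
      (fun i _ => zero_le_one) (fun i hi => hSD hi)
    simpa using this
  · intro w hw
    have hw' : w ∈ Submodule.span ℝ (S : Set E) := hSspan hw
    rw [Submodule.mem_span_finset] at hw'
    rcases hw' with ⟨g, -, hg⟩
    set B := ∑ a ∈ S, |g a| with hB
    have hBnn : 0 ≤ B := Finset.sum_nonneg fun a _ => abs_nonneg _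
    refine ⟨(1 + B)⁻¹, by positivity, ?_⟩
    have hcoef : ∀ a ∈ S, 0 ≤ 1 + (1 + B)⁻¹ * g a := by
      intro a ha
      have h1 : |g a| ≤ B := Finset.single_le_sum (fun a _ => abs_nonneg (g a)) ha
      have h2 : |(1 + B)⁻¹ * g a| = (1 + B)⁻¹ * |g a| := by
        rw [abs_mul, abs_of_nonneg (by positivity)]
      have h3 : (1 + B)⁻¹ * |g a| ≤ (1 + B)⁻¹ * (1 + B) := by
        apply mul_le_mul_of_nonneg_left _ (by positivity)
        linarith
      rw [inv_mul_cancel₀ (by positivity)] at h3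
      have := neg_abs_le ((1 + B)⁻¹ * g a)
      nlinarith [abs_nonneg ((1+B)⁻¹ * g a)]
    have heq : (∑ a ∈ S, a) + (1 + B)⁻¹ • w = ∑ a ∈ S, (1 + (1 + B)⁻¹ * g a) • a := by
      rw [← hg]
      rw [Finset.smul_sum, ← Finset.sum_add_distrib]
      congr 1
      ext a
      rw [add_smul, one_smul, smul_smul]
    rw [heq]
    exact Aux.sum_smul_mem_cone hconv hcone h0 S _ id (fun a ha => hcoef a ha)
      (fun a ha => hSD ha)

lemma affineSpan_eq_top_of_span [FiniteDimensional ℝ E] {s : Set E} (h0 : (0:E) ∈ s)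
    (hs : Submodule.span ℝ s = ⊤) : affineSpan ℝ s = ⊤ := by
  have hdir : vectorSpan ℝ s = ⊤ := by
    rw [eq_top_iff, ← hs, Submodule.span_le]
    intro y hy
    have : y - 0 ∈ vectorSpan ℝ s := vsub_mem_vectorSpan ℝ hy h0
    simpa using this
  rw [eq_top_iff]
  intro v _
  have h0' : (0:E) ∈ affineSpan ℝ s := mem_affineSpan ℝ h0
  have : v - 0 ∈ (affineSpan ℝ s).direction := by
    rw [direction_affineSpan, hdir]; trivial
  have := AffineSubspace.vadd_mem_of_mem_direction this h0'
  simpa using this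

/-- A convex set whose closure contains a ball around `s` contains `s`. -/
lemma mem_of_ball_subset_closure [FiniteDimensional ℝ E] {A : Set E} {s : E} {r : ℝ}
    (hA : Convex ℝ A) (hr : 0 < r) (hball : Metric.ball s r ⊆ closure A) : s ∈ A := by
  have hAne : A.Nonempty := by
    rcases (closure_nonempty_iff).mp ⟨s, hball (Metric.mem_ball_self hr)⟩ with h
    exact h
  have hcl : closure A ⊆ (affineSpan ℝ A : Set E) :=
    closure_minimal (subset_affineSpan ℝ A) (affineSpan ℝ A).closed_of_finiteDimensional
  have hs' : s ∈ affineSpan ℝ A := hcl (hball (Metric.mem_ball_self hr))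
  have hspan : affineSpan ℝ A = ⊤ := by
    rw [eq_top_iff]
    intro v _
    by_cases hvs : v = s
    · rw [hvs]; exact hs'
    · set w := v - s with hwdef
      have hw : w ≠ 0 := sub_ne_zero.mpr hvs
      have hwn : (0:ℝ) < ‖w‖ := norm_pos_iff.mpr hw
      set c : ℝ := r / (2 * ‖w‖) with hcdef
      have hc : 0 < c := by positivity
      have hpball : s + c • w ∈ Metric.ball s r := by
        simp only [Metric.mem_ball, dist_eq_norm, add_sub_cancel_left, norm_smul,
          Real.norm_eq_abs, abs_of_pos hc]
        rw [hcdef]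
        rw [div_mul_eq_mul_div]
        rw [div_lt_iff₀ (by positivity)]
        nlinarith
      have hp : s + c • w ∈ affineSpan ℝ A := hcl (hball hpball)
      have hd1 : (s + c • w) -ᵥ s ∈ (affineSpan ℝ A).direction :=
        AffineSubspace.vsub_mem_direction hp hs'
      have hd2 : w ∈ (affineSpan ℝ A).direction := by
        have : (s + c • w) -ᵥ s = c • w := by simp [vsub_eq_sub]
        rw [this] at hd1
        have := Submodule.smul_mem _ (c⁻¹) hd1
        rwa [smul_smul, inv_mul_cancel₀ hc.ne', one_smul] at this
      have := AffineSubspace.vadd_mem_of_mem_direction hd2 hs'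
      have hveq : w +ᵥ s = v := by simp [hwdef, vadd_eq_add]
      rwa [hveq] at this
  obtain ⟨x₀, hx₀⟩ := (hA.interior_nonempty_iff_affineSpan_eq_top).mpr hspan
  by_cases hsx : s = x₀
  · exact interior_subset (hsx ▸ hx₀)
  · set w := s - x₀ with hwdef
    have hw : w ≠ 0 := sub_ne_zero.mpr hsx
    have hwn : (0:ℝ) < ‖w‖ := norm_pos_iff.mpr hw
    set δ : ℝ := r / (2 * ‖w‖) with hδdef
    have hδ : 0 < δ := by positivity
    have hs'cl : s + δ • w ∈ closure A := by
      apply hball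
      simp only [Metric.mem_ball, dist_eq_norm, add_sub_cancel_left, norm_smul,
        Real.norm_eq_abs, abs_of_pos hδ]
      rw [hδdef, div_mul_eq_mul_div, div_lt_iff₀ (by positivity)]
      nlinarith
    have hseg : s ∈ openSegment ℝ x₀ (s + δ • w) := by
      refine ⟨δ / (1 + δ), 1 / (1 + δ), by positivity, by positivity, ?_, ?_⟩
      · field_simp; ring
      · have h1δ : (1 + δ) ≠ 0 := by positivity
        rw [hwdef, smul_add, smul_smul, smul_sub]
        rw [show 1 / (1 + δ) * δ = δ / (1 + δ) by ring]
        have hcomb : ∀ u v : E, (δ / (1+δ)) • u + ((1/(1+δ)) • v + ((δ/(1+δ)) • v - (δ/(1+δ)) • u)) = ((1/(1+δ)) + (δ/(1+δ))) • v := by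
          intro u v; module
        rw [hcomb x₀ s]
        rw [show (1/(1+δ)) + (δ/(1+δ)) = 1 by field_simp]
        rw [one_smul]
    have := hA.openSegment_interior_closure_subset_interior hx₀ hs'cl hseg
    exact interior_subset this

end Chunk2

section Chunk3

variable {Q : Set E}

lemma dualCone_convex (Q : Set E) : Convex ℝ (DualCone' Q) := by
  intro u₁ h₁ u₂ h₂ a b ha hb hab
  intro x hx
  have e : ⟪a • u₁ + b • u₂, x⟫ = a * ⟪u₁, x⟫ + b * ⟪u₂, x⟫ := by
    rw [inner_add_left, real_inner_smul_left, real_inner_smul_left]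
  rw [e]
  have := h₁ x hx; have := h₂ x hx
  positivity

lemma dualCone_smul {c : ℝ} (hc : 0 ≤ c) {u : E} (hu : u ∈ DualCone' Q) :
    c • u ∈ DualCone' Q := by
  intro x hx
  rw [real_inner_smul_left]
  exact mul_nonneg hc (hu x hx)

lemma zero_mem_dualCone (Q : Set E) : (0:E) ∈ DualCone' Q := by
  intro x hx; simp

lemma dualCone_antitone {K Q : Set E} (h : K ⊆ Q) : DualCone' Q ⊆ DualCone' K :=
  fun s hs x hx => hs x (h hx)

lemma dualCone_isClosed (Q : Set E) : IsClosed (DualCone' Q) := by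
  have : DualCone' Q = ⋂ x ∈ Q, {s : E | 0 ≤ ⟪s, x⟫} := by
    ext v; simp [DualCone']
  rw [this]
  exact isClosed_biInter fun x _ =>
    isClosed_le continuous_const (continuous_id.inner continuous_const)

lemma perpOf_eq (F : Set E) : PerpOf F = (((Submodule.span ℝ F)ᗮ : Submodule ℝ E) : Set E) := by
  ext v
  constructor
  · intro hv
    rw [SetLike.mem_coe, Submodule.mem_orthogonal]
    intro u hu
    induction hu using Submodule.span_induction with
    | mem y hy => rw [real_inner_comm]; exact hv y hy
    | zero => simp
    | add y z _ _ hy hz => rw [inner_add_left, hy, hz, add_zero]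
    | smul c y _ hy => rw [real_inner_smul_left, hy, mul_zero]
  · intro hv x hx
    rw [real_inner_comm]
    exact (Submodule.mem_orthogonal _ _).mp hv x (Submodule.subset_span hx)

lemma sep_closed_cone [FiniteDimensional ℝ E] (hQc : IsClosed Q) (hconv : Convex ℝ Q)
    (hcone : IsConeSet Q) (h0 : (0:E) ∈ Q) {v : E} (hv : v ∉ Q) :
    ∃ p : E, p ∈ DualCone' Q ∧ ⟪p, v⟫ < 0 := by
  obtain ⟨f, u, hfa, hfv⟩ := geometric_hahn_banach_closed_point hconv hQc hv
  have hu : 0 < u := by simpa using hfa 0 h0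
  have hle : ∀ q ∈ Q, f q ≤ 0 := by
    intro q hq
    by_contra hfq
    push_neg at hfq
    have ht : 0 < (u + 1) / f q := by positivity
    have := hfa _ (hcone _ ht q hq)
    rw [map_smul, smul_eq_mul, div_mul_cancel₀ _ hfq.ne'] at this
    linarith
  set w := (InnerProductSpace.toDual ℝ E).symm f with hw
  have hwy : ∀ y : E, ⟪w, y⟫ = f y := fun y => InnerProductSpace.toDual_symm_apply
  refine ⟨-w, ?_, ?_⟩
  · intro q hq
    have : ⟪-w, q⟫ = -f q := by rw [inner_neg_left, hwy]
    rw [this]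
    linarith [hle q hq]
  · have : ⟪-w, v⟫ = -f v := by rw [inner_neg_left, hwy]
    rw [this]
    linarith

lemma mem_closure_dualsum [FiniteDimensional ℝ E] (hQc : IsClosed Q) (hconv : Convex ℝ Q)
    (hcone : IsConeSet Q) (h0 : (0:E) ∈ Q) (L : Submodule ℝ E) {s' : E}
    (hd : ∀ d ∈ Q ∩ (L : Set E), 0 ≤ ⟪s', d⟫) :
    s' ∈ closure (DualCone' Q + ((Lᗮ : Submodule ℝ E) : Set E)) := by
  by_contra hns
  set A₀ : Set E := DualCone' Q + ((Lᗮ : Submodule ℝ E) : Set E) with hA₀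
  have hA₀conv : Convex ℝ A₀ := (dualCone_convex Q).add (Lᗮ).convex
  obtain ⟨f, u, hfa, hfs⟩ :=
    geometric_hahn_banach_closed_point hA₀conv.closure isClosed_closure hns
  have h0A : (0:E) ∈ A₀ := ⟨0, zero_mem_dualCone Q, 0, Submodule.zero_mem _, add_zero 0⟩
  have hu : 0 < u := by simpa using hfa 0 (subset_closure h0A)
  have hsmulA : ∀ (t : ℝ), 0 < t → ∀ a ∈ A₀, t • a ∈ A₀ := by
    rintro t ht a ⟨p, hp, y, hy, rfl⟩
    exact ⟨t • p, dualCone_smul ht.le hp, t • y, Submodule.smul_mem _ _ hy, (smul_add t p y).symm⟩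
  have hle : ∀ a ∈ A₀, f a ≤ 0 := by
    intro a ha
    by_contra hfq
    push_neg at hfq
    have ht : 0 < (u + 1) / f a := by positivity
    have := hfa _ (subset_closure (hsmulA _ ht a ha))
    rw [map_smul, smul_eq_mul, div_mul_cancel₀ _ hfq.ne'] at this
    linarith
  set w := (InnerProductSpace.toDual ℝ E).symm f with hw
  have hwy : ∀ y : E, ⟪w, y⟫ = f y := fun y => InnerProductSpace.toDual_symm_apply
  have hwQ : -w ∈ Q := by
    by_contra hnw
    obtain ⟨p, hp, hpv⟩ := sep_closed_cone hQc hconv hcone h0 hnw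
    have hpA : p ∈ A₀ := ⟨p, hp, 0, Submodule.zero_mem _, add_zero p⟩
    have h1 : f p ≤ 0 := hle p hpA
    rw [← hwy] at h1
    rw [inner_neg_right] at hpv
    rw [real_inner_comm] at h1
    linarith
  have hwL : -w ∈ L := by
    have hmem : w ∈ (Lᗮ)ᗮ := by
      rw [Submodule.mem_orthogonal]
      intro y hy
      have h1 : f y ≤ 0 := hle y ⟨0, zero_mem_dualCone Q, y, hy, zero_add y⟩
      have h2 : f (-y) ≤ 0 := hle (-y) ⟨0, zero_mem_dualCone Q, -y, Submodule.neg_mem _ hy, zero_add _⟩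
      rw [map_neg] at h2
      have : f y = 0 := le_antisymm h1 (by linarith)
      rw [real_inner_comm, hwy, this]
    rw [Submodule.orthogonal_orthogonal] at hmem
    exact Submodule.neg_mem _ hmem
  have hdd := hd (-w) ⟨hwQ, hwL⟩
  have hfs' : 0 < f s' := lt_trans hu hfs
  rw [← hwy, real_inner_comm] at hfs'
  rw [inner_neg_right] at hdd
  linarith

lemma add_mem_closure_add {X Y : Set E} {a b : E} (ha : a ∈ closure X) (hb : b ∈ Y) :
    a + b ∈ closure (X + Y) := by
  have hc : Continuous fun t : E => t + b := continuous_add_right b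
  have := map_mem_closure hc ha (fun x hx => Set.add_mem_add hx hb)
  exact this

end Chunk3

section Chunk4

lemma face_trans {F' Q C : Set E} (h1 : IsFaceOf F' Q) (h2 : IsFaceOf Q C) : IsFaceOf F' C := by
  obtain ⟨hsub1, hconv1, hcl1, hface1⟩ := h1
  obtain ⟨hsub2, _, _, hface2⟩ := h2
  refine ⟨hsub1.trans hsub2, hconv1, hcl1, ?_⟩
  intro x hx y hy z hz hseg
  obtain ⟨hyQ, hzQ⟩ := hface2 x (hsub1 hx) y hy z hz hseg
  exact hface1 x hx y hyQ z hzQ hseg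

lemma zero_mem_face {F K : Set E} (hKconv : Convex ℝ K) (hKcone : IsConeSet K)
    (h0K : (0:E) ∈ K) (hF : IsFaceOf F K) (hFne : F.Nonempty) : (0:E) ∈ F := by
  obtain ⟨y, hy⟩ := hFne
  by_cases hy0 : y = 0
  · rwa [← hy0]
  have h2y : (2:ℝ) • y ∈ K := hKcone 2 (by norm_num) y (hF.1 hy)
  have hseg : y ∈ openSegment ℝ (0:E) ((2:ℝ) • y) := by
    refine ⟨1/2, 1/2, by norm_num, by norm_num, by norm_num, ?_⟩
    rw [smul_zero, zero_add, smul_smul]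
    norm_num
  exact (hF.2.2.2 y hy 0 h0K _ h2y hseg).1

lemma face_cone {F K : Set E} (hKconv : Convex ℝ K) (hKcone : IsConeSet K)
    (h0K : (0:E) ∈ K) (hF : IsFaceOf F K) : IsConeSet F := by
  intro c hc y hy
  rcases lt_trichotomy c 1 with hlt | heq | hgt
  · -- y ∈ openSegment (c•y) (2•y)
    have hcy : c • y ∈ K := hKcone c hc y (hF.1 hy)
    have h2y : (2:ℝ) • y ∈ K := hKcone 2 (by norm_num) y (hF.1 hy)
    have h2c : (2:ℝ) - c ≠ 0 := by linarith
    have ht : (0:ℝ) < 1/(2 - c) := div_pos one_pos (by linarith)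
    have hseg : y ∈ openSegment ℝ (c • y) ((2:ℝ) • y) := by
      refine ⟨1/(2 - c), 1 - 1/(2-c), ht, ?_, by ring, ?_⟩
      · have h1 : 1/(2-c) < 1 := by
          rw [div_lt_one (by linarith)]
          linarith
        linarith
      · rw [smul_smul, smul_smul, ← add_smul]
        have heq1 : 1 / (2 - c) * c + (1 - 1 / (2 - c)) * 2 = 1 := by
          field_simp
          ring
        rw [heq1, one_smul]
    exact (hF.2.2.2 y hy _ hcy _ h2y hseg).1
  · rw [heq, one_smul]; exact hy
  · have hcy : c • y ∈ K := hKcone c hc y (hF.1 hy)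
    have hseg : y ∈ openSegment ℝ (c • y) (0:E) := by
      refine ⟨1/c, 1 - 1/c, by positivity, ?_, by ring, ?_⟩
      · have : 1/c < 1 := by rw [div_lt_one (by linarith)]; linarith
        linarith
      · rw [smul_zero, add_zero, smul_smul]
        rw [show (1/c) * c = 1 by field_simp]
        rw [one_smul]
    exact (hF.2.2.2 y hy _ hcy 0 h0K hseg).1

lemma face_inter_span_eq [FiniteDimensional ℝ E] {F K : Set E} (hKconv : Convex ℝ K)
    (hKcone : IsConeSet K) (h0K : (0:E) ∈ K) (hF : IsFaceOf F K) (hFne : F.Nonempty) :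
    K ∩ ((Submodule.span ℝ F : Submodule ℝ E) : Set E) = F := by
  apply Set.Subset.antisymm
  · rintro q ⟨hqK, hqspan⟩
    have h0F : (0:E) ∈ F := zero_mem_face hKconv hKcone h0K hF hFne
    have hFcone : IsConeSet F := face_cone hKconv hKcone h0K hF
    obtain ⟨z, hz, hcore⟩ := exists_core_point hF.2.1 hFcone h0F
    by_cases hqz : q = z
    · rwa [hqz]
    have hzq : z - q ∈ Submodule.span ℝ F := by
      exact Submodule.sub_mem _ (Submodule.subset_span hz) hqspan
    obtain ⟨δ, hδ, hmem⟩ := hcore (z - q) hzq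
    have h1δ : (1+δ) ≠ 0 := by positivity
    have hseg : z ∈ openSegment ℝ q (z + δ • (z - q)) := by
      refine ⟨δ/(1+δ), 1/(1+δ), by positivity, by positivity, by field_simp; ring, ?_⟩
      rw [smul_add, smul_smul, smul_sub]
      rw [show (1/(1+δ)) * δ = δ/(1+δ) by ring]
      have : ∀ u v : E, (δ/(1+δ)) • u + ((1/(1+δ)) • v + ((δ/(1+δ)) • v - (δ/(1+δ)) • u)) = ((1/(1+δ)) + (δ/(1+δ))) • v := by
        intro u v; module
      rw [this q z, show (1/(1+δ)) + (δ/(1+δ)) = 1 by field_simp, one_smul]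
    exact (hF.2.2.2 z hz q hqK _ (hF.1 hmem) hseg).1
  · intro f hf
    exact ⟨hF.1 hf, Submodule.subset_span hf⟩

end Chunk4

section Chunk5

def TangentiallyExposed' (C : Set E) : Prop :=
  ∀ F : Set E, IsProperFaceOf F C → ∀ x ∈ F,
    TangCone x C ∩ (Submodule.span ℝ F : Set E) = TangCone x F

lemma tangent_exposure_face {Qh Q F' : Set E} (hexp : TangentiallyExposed' Qh)
    (hQ : Q = Qh ∨ IsProperFaceOf Q Qh) (hF' : IsProperFaceOf F' Qh) (hF'Q : F' ⊆ Q)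
    {x : E} (hx : x ∈ F') :
    TangCone x Q ∩ ((Submodule.span ℝ F' : Submodule ℝ E) : Set E) = TangCone x F' := by
  rcases hQ with rfl | hQp
  · exact hexp F' hF' x hx
  · have h1 := hexp F' hF' x hx
    have h2 := hexp Q hQp x (hF'Q hx)
    have hsub : ((Submodule.span ℝ F' : Submodule ℝ E) : Set E) ⊆
        ((Submodule.span ℝ Q : Submodule ℝ E) : Set E) := Submodule.span_mono hF'Q
    rw [← h1, ← h2]
    ext v
    constructor
    · rintro ⟨⟨hv1, _⟩, hv3⟩
      exact ⟨hv1, hv3⟩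
    · rintro ⟨hv1, hv3⟩
      exact ⟨⟨hv1, hsub hv3⟩, hv3⟩

set_option maxHeartbeats 1000000 in
lemma lemA [FiniteDimensional ℝ E] {Qh : Set E} (hexp : TangentiallyExposed' Qh) :
    ∀ (n : ℕ) (Q : Set E), Module.finrank ℝ (Submodule.span ℝ Q) ≤ n →
    (Q = Qh ∨ IsProperFaceOf Q Qh) →
    IsClosed Q → Convex ℝ Q → IsConeSet Q → (0:E) ∈ Q →
    ∀ (L : Submodule ℝ E), Submodule.span ℝ (Q ∩ (L : Set E)) = L →
    ∀ (s : E), (∀ d ∈ Q ∩ (L : Set E), 0 ≤ ⟪s, d⟫) →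
    ∀ x ∈ Q ∩ (L : Set E), ⟪s, x⟫ = 0 →
    ∀ u ∈ TangCone x Q ∩ (L : Set E), 0 ≤ ⟪s, u⟫ := by
  intro n
  induction n with
  | zero =>
      intro Q hrank _ _ _ _ _ L _ s _ x hx _ u hu
      have hQbot : Submodule.span ℝ Q = ⊥ :=
        Submodule.finrank_eq_zero.mp (Nat.le_zero.mp hrank)
      have hQ0' : Q ⊆ {(0:E)} := by
        intro q hq
        have : q ∈ Submodule.span ℝ Q := Submodule.subset_span hq
        rw [hQbot] at this
        simpa using this
      have hfeas : Aux.Feas x Q ⊆ {(0:E)} := by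
        rintro d ⟨ε, hε, hm⟩
        have hx0 : x = 0 := hQ0' hx.1
        have : x + ε • d = 0 := hQ0' hm
        rw [hx0, zero_add] at this
        have := (smul_eq_zero.mp this).resolve_left hε.ne'
        simpa using this
      have : u ∈ ({(0:E)} : Set E) :=
        closure_minimal hfeas isClosed_singleton hu.1
      simp only [Set.mem_singleton_iff] at this
      simp [this]
  | succ n ih =>
      intro Q hrank hQface hQc hQconv hQcone hQ0 L hspan s hsD x hx hsx u hu
      set D := Q ∩ (L : Set E) with hD
      have hDconv : Convex ℝ D := hQconv.inter L.convex
      have hDcone : IsConeSet D := by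
        intro c hc d hd
        exact ⟨hQcone c hc d hd.1, L.smul_mem c hd.2⟩
      have hD0 : (0:E) ∈ D := ⟨hQ0, L.zero_mem⟩
      obtain ⟨z, hzD, hzcore⟩ := exists_core_point hDconv hDcone hD0
      rw [hspan] at hzcore
      have hzL : z ∈ L := hzD.2
      have hxL : x ∈ L := hx.2
      have hxQ : x ∈ Q := hx.1
      set W := Submodule.span ℝ Q with hW
      set Qt : Set E := Q + ((Wᗮ : Submodule ℝ E) : Set E) with hQt
      have hQtconv : Convex ℝ Qt := hQconv.add (Wᗮ).convex
      have hQsubQt : Q ⊆ Qt := fun q hq => ⟨q, hq, 0, Submodule.zero_mem _, add_zero q⟩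
      by_cases hzint : z ∈ interior Qt
      · -- Case 1 : z is a relative interior point of Q
        obtain ⟨r, hr, hball⟩ := Metric.isOpen_iff.mp isOpen_interior z hzint
        have hWQ : ∀ w ∈ W, ‖w‖ < r → z + w ∈ Q := by
          intro w hw hwr
          have hmem : z + w ∈ Qt := interior_subset (hball (by
            simp only [Metric.mem_ball, dist_eq_norm, add_sub_cancel_left]
            exact hwr))
          rcases Set.mem_add.mp hmem with ⟨q, hq, y, hy, heq⟩
          have hqW : q ∈ W := Submodule.subset_span hq
          have hzW : z ∈ W := Submodule.subset_span hzD.1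
          have hyW : y ∈ W := by
            have hyeq : y = z + w - q := by rw [← heq]; module
            rw [hyeq]
            exact Submodule.sub_mem _ (Submodule.add_mem _ hzW hw) hqW
          have hy0 : y = 0 := by
            have := (Submodule.mem_orthogonal _ _).mp hy y hyW
            exact inner_self_eq_zero.mp this
          rw [hy0, add_zero] at heq
          rwa [heq] at hq
        set C := Aux.Feas x Q with hC
        have hCconv : Convex ℝ C := Aux.feas_convex hQconv hxQ
        have huW : u ∈ W := Aux.tangCone_subset_span hxQ hu.1
        have huC : u ∈ closure C := hu.1
        have key : ∀ θ : ℝ, 0 < θ → θ < 1 → 0 ≤ θ * ⟪s, z⟫ + (1-θ) * ⟪s, u⟫ := by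
          intro θ hθ hθ1
          have h1θpos : (0:ℝ) < 1 - θ := by linarith
          have hεpos : 0 < r * θ / (1 - θ) := div_pos (mul_pos hr hθ) h1θpos
          obtain ⟨u', hu'C, hdist⟩ := Metric.mem_closure_iff.mp huC _ hεpos
          have hu'W : u' ∈ W := Aux.feas_subset_span hxQ hu'C
          set p : E := (z - x) + ((1-θ)/θ) • (u - u') with hp
          have hpC : p ∈ C := by
            refine ⟨1, one_pos, ?_⟩
            have heq : x + (1:ℝ) • p = z + ((1-θ)/θ) • (u - u') := by
              rw [hp]; module
            rw [heq]
            apply hWQ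
            · exact Submodule.smul_mem _ _ (Submodule.sub_mem _ huW hu'W)
            · rw [norm_smul, Real.norm_eq_abs, abs_of_pos (div_pos h1θpos hθ)]
              rw [dist_eq_norm] at hdist
              calc (1-θ)/θ * ‖u - u'‖ < (1-θ)/θ * (r * θ / (1-θ)) := by
                    apply mul_lt_mul_of_pos_left hdist (div_pos h1θpos hθ)
                _ = r := by
                    field_simp
          have hwθC : θ • p + (1-θ) • u' ∈ C :=
            hCconv hpC hu'C hθ.le (by linarith) (by ring)
          have hcoef : θ * ((1-θ)/θ) = 1 - θ := by field_simp
          have heqw : θ • p + (1-θ) • u' = θ • (z - x) + (1-θ) • u := by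
            rw [hp, smul_add, smul_smul, hcoef]
            module
          rw [heqw] at hwθC
          set wθ : E := θ • (z - x) + (1-θ) • u with hwθ
          have hwθL : wθ ∈ L := by
            exact L.add_mem (L.smul_mem _ (L.sub_mem hzL hxL)) (L.smul_mem _ hu.2)
          obtain ⟨ε, hε, hεm⟩ := hwθC
          have hmemD : x + ε • wθ ∈ D := ⟨hεm, L.add_mem hxL (L.smul_mem _ hwθL)⟩
          have hpos := hsD _ hmemD
          have hcomp : ⟪s, x + ε • wθ⟫ = ε * ⟪s, wθ⟫ := by
            rw [inner_add_right, real_inner_smul_right, hsx, zero_add]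
          rw [hcomp] at hpos
          have h1 : 0 ≤ ⟪s, wθ⟫ := nonneg_of_mul_nonneg_right hpos hε
          have h2 : ⟪s, wθ⟫ = θ * ⟪s, z⟫ + (1-θ) * ⟪s, u⟫ := by
            rw [hwθ, inner_add_right, real_inner_smul_right, real_inner_smul_right,
              inner_sub_right, hsx, sub_zero]
          linarith [h2 ▸ h1]
        have ha : 0 ≤ ⟪s, z⟫ := hsD z hzD
        by_contra hbneg
        push_neg at hbneg
        set a : ℝ := ⟪s, z⟫
        set b : ℝ := ⟪s, u⟫
        have hab : 0 < a - b := by simp only [a, b] at *; linarith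
        set θ : ℝ := -b / (2 * (a - b)) with hθdef
        have hθpos : 0 < θ := by
          apply div_pos (by simp only [b] at *; linarith) (by linarith)
        have hθlt : θ < 1 := by
          rw [hθdef, div_lt_one (by linarith)]
          simp only [a, b] at *
          linarith
        have hval := key θ hθpos hθlt
        have hcomp : θ * (a - b) = -b / 2 := by
          rw [hθdef]; field_simp
        nlinarith [hval, hcomp]
      · -- Case 2 : z lies on the relative boundary; produce a proper face
        have hQ0t : (0:E) ∈ Qt := hQsubQt hQ0
        have hspanQt : Submodule.span ℝ Qt = ⊤ := by
          rw [eq_top_iff]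
          have hW' : W ≤ Submodule.span ℝ Qt := by
            rw [hW]
            exact Submodule.span_mono hQsubQt
          have hWp : Wᗮ ≤ Submodule.span ℝ Qt := by
            intro y hy
            exact Submodule.subset_span ⟨0, hQ0, y, hy, zero_add y⟩
          rw [← Submodule.sup_orthogonal_of_hasOrthogonalProjection (K := W)]
          exact sup_le hW' hWp
        have haff : affineSpan ℝ Qt = ⊤ := affineSpan_eq_top_of_span hQ0t hspanQt
        obtain ⟨z₀, hz₀⟩ := (hQtconv.interior_nonempty_iff_affineSpan_eq_top).mpr haff
        obtain ⟨f, hf⟩ := geometric_hahn_banach_open_point hQtconv.interior isOpen_interior hzint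
        have hfle : ∀ a ∈ Qt, f a ≤ f z := by
          intro a ha
          by_contra hlt
          push_neg at hlt
          have hfz₀ : f z₀ < f z := hf z₀ hz₀
          have hc : (0:ℝ) < f a - f z₀ := by linarith
          set t : ℝ := (f a - f z) / (2 * (f a - f z₀)) with htdef
          have ht : 0 < t := div_pos (by linarith) (by linarith)
          have ht1 : t < 1 := by
            rw [htdef, div_lt_one (by linarith)]
            linarith
          have hseg : t • z₀ + (1-t) • a ∈ interior Qt :=
            hQtconv.openSegment_interior_closure_subset_interior hz₀ (subset_closure ha)
              ⟨t, 1-t, ht, by linarith, by ring, rfl⟩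
          have hlt2 := hf _ hseg
          rw [map_add, map_smul, map_smul, smul_eq_mul, smul_eq_mul] at hlt2
          have ht' : t * (f a - f z₀) = (f a - f z) / 2 := by
            rw [htdef]; field_simp
          nlinarith
        have hfz0 : f z = 0 := by
          have h2 : f ((2:ℝ) • z) ≤ f z := hfle _ (hQsubQt (hQcone 2 two_pos z hzD.1))
          rw [map_smul, smul_eq_mul] at h2
          have h0' : (0:ℝ) ≤ f z := by
            have := hfle 0 hQ0t
            simpa using this
          linarith
        have hfQ : ∀ q ∈ Q, f q ≤ 0 := by
          intro q hq
          have := hfle q (hQsubQt hq)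
          rwa [hfz0] at this
        have hq₀ : ∃ q₀ ∈ Q, f q₀ < 0 := by
          by_contra hcon
          push_neg at hcon
          have hfQ0 : ∀ q ∈ Q, f q = 0 := fun q hq => le_antisymm (hfQ q hq) (hcon q hq)
          have hfWp : ∀ y ∈ Wᗮ, f y = 0 := by
            intro y hy
            have h1 : f y ≤ 0 := by
              have := hfle y ⟨0, hQ0, y, hy, zero_add y⟩
              rwa [hfz0] at this
            have h2 : f (-y) ≤ 0 := by
              have := hfle (-y) ⟨0, hQ0, -y, Submodule.neg_mem _ hy, zero_add _⟩
              rwa [hfz0] at this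
            rw [map_neg] at h2
            linarith
          have hz₀Qt : z₀ ∈ Qt := interior_subset hz₀
          rcases hz₀Qt with ⟨q, hq, y, hy, heq⟩
          have : f z₀ = 0 := by
            rw [← heq, map_add, hfQ0 q hq, hfWp y hy, add_zero]
          have := hf z₀ hz₀
          rw [hfz0] at this
          linarith
        obtain ⟨q₀, hq₀Q, hq₀f⟩ := hq₀
        set F' : Set E := {q ∈ Q | f q = 0} with hF'
        have hF'subQ : F' ⊆ Q := fun q hq => hq.1
        have hF'conv : Convex ℝ F' := by
          intro q₁ h₁ q₂ h₂ a' b' ha' hb' hab'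
          refine ⟨hQconv h₁.1 h₂.1 ha' hb' hab', ?_⟩
          rw [map_add, map_smul, map_smul, smul_eq_mul, smul_eq_mul, h₁.2, h₂.2]
          ring
        have hF'closed : IsClosed F' := by
          have : F' = Q ∩ (f ⁻¹' {0}) := by
            ext q; simp [hF', Set.mem_preimage]
          rw [this]
          exact hQc.inter (isClosed_singleton.preimage f.continuous)
        have hF'face : IsFaceOf F' Q := by
          refine ⟨hF'subQ, hF'conv, hF'closed, ?_⟩
          rintro x' hx' y hy z' hz' ⟨a', b', ha', hb', hab', heq⟩
          have hfx' : f x' = 0 := hx'.2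
          have hfy : f y ≤ 0 := hfQ y hy
          have hfz' : f z' ≤ 0 := hfQ z' hz'
          have hsum : a' * f y + b' * f z' = 0 := by
            rw [← hfx', ← heq, map_add, map_smul, map_smul, smul_eq_mul, smul_eq_mul]
          have hy0 : f y = 0 := by nlinarith
          have hz'0 : f z' = 0 := by nlinarith
          exact ⟨⟨hy, hy0⟩, ⟨hz', hz'0⟩⟩
        have hF'ne : F'.Nonempty := ⟨z, hzD.1, hfz0⟩
        have hF'neQ : F' ≠ Q := by
          intro h
          have : q₀ ∈ F' := h ▸ hq₀Q
          exact absurd this.2 hq₀f.ne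
        have hDF' : D ⊆ F' := by
          intro d hd
          refine ⟨hd.1, ?_⟩
          obtain ⟨δ, hδ, hm⟩ := hzcore (z - d) (L.sub_mem hzL hd.2)
          have h1 : f (z + δ • (z - d)) ≤ 0 := hfQ _ hm.1
          rw [map_add, map_smul, map_sub, smul_eq_mul, hfz0] at h1
          have h2 : f d ≤ 0 := hfQ d hd.1
          nlinarith
        have hF'p : IsProperFaceOf F' Qh := by
          rcases hQface with rfl | hQp
          · exact ⟨hF'face, hF'ne, hF'neQ⟩
          · refine ⟨face_trans hF'face hQp.1, hF'ne, ?_⟩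
            intro h
            exact hQp.2.2 (Set.Subset.antisymm hQp.1.1 (h ▸ hF'subQ : Qh ⊆ Q))
        have hxF' : x ∈ F' := hDF' hx
        have htan := tangent_exposure_face hexp hQface hF'p hF'subQ hxF'
        have hLspanF' : L ≤ Submodule.span ℝ F' := by
          rw [← hspan]
          exact Submodule.span_le.mpr (fun d hd => Submodule.subset_span (hDF' hd))
        have huF' : u ∈ TangCone x F' := by
          rw [← htan]
          exact ⟨hu.1, hLspanF' hu.2⟩
        have hF'D : F' ∩ (L : Set E) = D := by
          apply Set.Subset.antisymm
          · rintro d ⟨hd1, hd2⟩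
            exact ⟨hF'subQ hd1, hd2⟩
          · intro d hd
            exact ⟨hDF' hd, hd.2⟩
        have hrankF' : Module.finrank ℝ (Submodule.span ℝ F') ≤ n := by
          have hle' : Submodule.span ℝ F' ≤ W := by
            rw [hW]; exact Submodule.span_mono hF'subQ
          have hker : Submodule.span ℝ F' ≤ LinearMap.ker (f : E →ₗ[ℝ] ℝ) := by
            apply Submodule.span_le.mpr
            intro q hq
            simpa [LinearMap.mem_ker] using hq.2
          have hne : Submodule.span ℝ F' ≠ W := by
            intro h
            have : q₀ ∈ Submodule.span ℝ F' := by
              rw [h, hW]; exact Submodule.subset_span hq₀Q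
            have := hker this
            rw [LinearMap.mem_ker] at this
            simp only [ContinuousLinearMap.coe_coe] at this
            exact absurd this hq₀f.ne
          have := Submodule.finrank_lt_finrank_of_lt (lt_of_le_of_ne hle' hne)
          omega
        have hF'cone : IsConeSet F' := by
          intro c hc q hq
          refine ⟨hQcone c hc q hq.1, ?_⟩
          rw [map_smul, smul_eq_mul, hq.2, mul_zero]
        have hF'0 : (0:E) ∈ F' := ⟨hQ0, map_zero f⟩
        refine ih F' hrankF' (Or.inr hF'p) hF'closed hF'conv hF'cone hF'0 L ?_ s ?_ x ?_ hsx u ⟨huF', hu.2⟩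
        · rw [hF'D]; exact hspan
        · rw [hF'D]; exact fun d hd => hsD d hd
        · rw [hF'D]; exact hx

end Chunk5

section Chunk6

def TangFamily' (F : Set (Set E)) : Set (Set E) :=
  {T | ∃ C ∈ F, ∃ x ∈ C, T = TangCone x C}

def TangIter' (C : Set E) : ℕ → Set (Set E)
  | 0 => {C}
  | k + 1 => TangFamily' (TangIter' C k)

def linealSub (Q : Set E) (hconv : Convex ℝ Q) (hcone : IsConeSet Q) (h0 : (0:E) ∈ Q) :
    Submodule ℝ E where
  carrier := {v | v ∈ Q ∧ -v ∈ Q}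
  add_mem' := by
    rintro a b ⟨ha1, ha2⟩ ⟨hb1, hb2⟩
    refine ⟨Aux.add_mem_cone hconv hcone ha1 hb1, ?_⟩
    rw [neg_add]
    exact Aux.add_mem_cone hconv hcone ha2 hb2
  zero_mem' := ⟨h0, by simpa using h0⟩
  smul_mem' := by
    intro c v hv
    rcases lt_trichotomy c 0 with hc | hc | hc
    · have h1 : c • v = (-c) • (-v) := by module
      have h2 : -(c • v) = (-c) • v := by module
      exact ⟨h1 ▸ hcone (-c) (by linarith) _ hv.2, h2 ▸ hcone (-c) (by linarith) _ hv.1⟩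
    · subst hc
      exact ⟨by simpa using h0, by simpa using h0⟩
    · refine ⟨hcone c hc _ hv.1, ?_⟩
      have : -(c • v) = c • (-v) := by module
      exact this ▸ hcone c hc _ hv.2

lemma mem_linealSub {Q : Set E} {hconv : Convex ℝ Q} {hcone : IsConeSet Q} {h0 : (0:E) ∈ Q}
    {v : E} : v ∈ linealSub Q hconv hcone h0 ↔ v ∈ Q ∧ -v ∈ Q := Iff.rfl

/-- Terminal case of the main induction. -/
lemma lemBterm [FiniteDimensional ℝ E] {Q : Set E} (hQc : IsClosed Q) (hQconv : Convex ℝ Q)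
    (hQcone : IsConeSet Q) (hQ0 : (0:E) ∈ Q) (L : Submodule ℝ E)
    (hspan : Submodule.span ℝ (Q ∩ (L : Set E)) = L) (s : E)
    (hsD : ∀ d ∈ Q ∩ (L : Set E), 0 ≤ ⟪s, d⟫)
    (hcrit : ∀ d ∈ Q ∩ (L : Set E), ⟪s, d⟫ = 0 → -d ∈ Q) :
    ∃ u v : E, u ∈ DualCone' Q ∧ v ∈ Lᗮ ∧ s = u + v := by
  set D := Q ∩ (L : Set E) with hD
  have hDconv : Convex ℝ D := hQconv.inter L.convex
  have hDcone : IsConeSet D := fun c hc d hd => ⟨hQcone c hc d hd.1, L.smul_mem c hd.2⟩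
  have hD0 : (0:E) ∈ D := ⟨hQ0, L.zero_mem⟩
  have hDclosed : IsClosed D := hQc.inter L.closed_of_finiteDimensional
  set M := linealSub D hDconv hDcone hD0 with hM
  have hMD : ∀ m ∈ M, m ∈ D ∧ -m ∈ D := fun m hm => hm
  have hML : M ≤ L := fun m hm => (hMD m hm).1.2
  have hsM : ∀ m ∈ M, ⟪s, m⟫ = 0 := by
    intro m hm
    have h1 := hsD m (hMD m hm).1
    have h2 := hsD (-m) (hMD m hm).2
    rw [inner_neg_right] at h2
    linarith
  have hMmem : ∀ d ∈ D, ⟪s, d⟫ = 0 → d ∈ M := by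
    intro d hd hsd
    exact ⟨hd, hcrit d hd hsd, L.neg_mem hd.2⟩
  by_cases hDM : ∀ d ∈ D, d ∈ M
  · -- D ⊆ M : then L ≤ M and s ⊥ L
    have hLM : L ≤ M := by
      rw [← hspan]
      exact Submodule.span_le.mpr (fun d hd => hDM d hd)
    refine ⟨0, s, zero_mem_dualCone Q, ?_, (zero_add s).symm⟩
    rw [Submodule.mem_orthogonal]
    intro y hy
    rw [real_inner_comm]
    exact hsM y (hLM hy)
  · push_neg at hDM
    obtain ⟨d₀, hd₀D, hd₀M⟩ := hDM
    -- the projected part of d₀ is a nonzero element of D ∩ Mᗮ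
    obtain ⟨dM, hdM, dP, hdP, hd₀eq⟩ := M.exists_add_mem_mem_orthogonal d₀
    have hdPD : dP ∈ D := by
      have h1 : -dM ∈ D := (hMD dM hdM).2
      have : dP = d₀ + -dM := by rw [hd₀eq]; abel
      rw [this]
      exact Aux.add_mem_cone hDconv hDcone hd₀D h1
    have hdPne : dP ≠ 0 := by
      intro h
      apply hd₀M
      rw [h, add_zero] at hd₀eq
      rw [hd₀eq]
      exact hdM
    -- minimum of ⟪s,·⟫ on the compact set T
    set T := (D ∩ (Mᗮ : Set E)) ∩ Metric.sphere (0:E) 1 with hT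
    have hTc : IsCompact T :=
      (isCompact_sphere (0:E) 1).inter_left (hDclosed.inter (Mᗮ).closed_of_finiteDimensional)
    have hTne : T.Nonempty := by
      refine ⟨‖dP‖⁻¹ • dP, ⟨⟨hDcone _ (inv_pos.mpr (norm_pos_iff.mpr hdPne)) _ hdPD, (Mᗮ).smul_mem _ hdP⟩, ?_⟩⟩
      simp only [mem_sphere_iff_norm, sub_zero, norm_smul, norm_inv, norm_norm]
      rw [inv_mul_cancel₀ (norm_ne_zero_iff.mpr hdPne)]
    have hcont : ContinuousOn (fun d : E => ⟪s, d⟫) T :=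
      (continuous_const.inner continuous_id).continuousOn
    obtain ⟨d₁, hd₁T, hmin⟩ := hTc.exists_isMinOn hTne hcont
    set c := ⟪s, d₁⟫ with hc
    have hcpos : 0 < c := by
      rcases hd₁T with ⟨⟨hd₁D, hd₁P⟩, hd₁s⟩
      have h1 : 0 ≤ c := hsD d₁ hd₁D
      rcases h1.lt_or_eq with h | h
      · exact h
      · exfalso
        have hd₁M : d₁ ∈ M := hMmem d₁ hd₁D h.symm
        have : ⟪d₁, d₁⟫ = 0 := (Submodule.mem_orthogonal _ _).mp hd₁P d₁ hd₁M
        have hd₁0 : d₁ = 0 := inner_self_eq_zero.mp this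
        rw [mem_sphere_iff_norm, sub_zero, hd₁0] at hd₁s
        simp at hd₁s
    have hscale : ∀ d, d ∈ D → d ∈ Mᗮ → c * ‖d‖ ≤ ⟪s, d⟫ := by
      intro d hdD hdP'
      by_cases hd0 : d = 0
      · simp [hd0]
      · have hdn : (0:ℝ) < ‖d‖ := norm_pos_iff.mpr hd0
        have hmem : ‖d‖⁻¹ • d ∈ T := by
          refine ⟨⟨hDcone _ (by positivity) _ hdD, (Mᗮ).smul_mem _ hdP'⟩, ?_⟩
          simp only [mem_sphere_iff_norm, sub_zero, norm_smul, norm_inv, norm_norm]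
          rw [inv_mul_cancel₀ hdn.ne']
        have := isMinOn_iff.mp hmin _ hmem
        rw [real_inner_smul_right] at this
        calc c * ‖d‖ ≤ (‖d‖⁻¹ * ⟪s, d⟫) * ‖d‖ := by
              apply mul_le_mul_of_nonneg_right this hdn.le
          _ = ⟪s, d⟫ := by field_simp
    set r := c / 2 with hr
    have hrpos : 0 < r := by positivity
    set A₀ : Set E := DualCone' Q + ((Lᗮ : Submodule ℝ E) : Set E) with hA₀
    set Ahat : Set E := A₀ + ((M : Submodule ℝ E) : Set E) with hAhat
    have hAhatconv : Convex ℝ Ahat := ((dualCone_convex Q).add (Lᗮ).convex).add M.convex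
    have hball : Metric.ball s r ⊆ closure Ahat := by
      intro y hy
      rw [Metric.mem_ball, dist_eq_norm] at hy
      set t := y - s with ht
      obtain ⟨tM, htM, tP, htP, hteq⟩ := M.exists_add_mem_mem_orthogonal t
      have htPn : ‖tP‖ < r := by
        have hinner : ⟪tM, tP⟫ = 0 := (Submodule.mem_orthogonal _ _).mp htP tM htM
        have hsq : ‖t‖^2 = ‖tM‖^2 + ‖tP‖^2 := by
          rw [hteq, norm_add_sq_real, hinner]
          ring
        nlinarith [norm_nonneg tP, norm_nonneg tM, norm_nonneg t]
      have hsP : ∀ d ∈ D, 0 ≤ ⟪s + tP, d⟫ := by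
        intro d hdD
        obtain ⟨dM', hdM', dP', hdP', hdeq⟩ := M.exists_add_mem_mem_orthogonal d
        have hdP'D : dP' ∈ D := by
          have h1 : -dM' ∈ D := (hMD dM' hdM').2
          have : dP' = d + -dM' := by rw [hdeq]; abel
          rw [this]
          exact Aux.add_mem_cone hDconv hDcone hdD h1
        have e1 : ⟪s, dM'⟫ = 0 := hsM dM' hdM'
        have e2 : ⟪tP, dM'⟫ = 0 := by
          rw [real_inner_comm]
          exact (Submodule.mem_orthogonal _ _).mp htP dM' hdM'
        have e3 : c * ‖dP'‖ ≤ ⟪s, dP'⟫ := hscale dP' hdP'D hdP'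
        have e4 : -(‖tP‖ * ‖dP'‖) ≤ ⟪tP, dP'⟫ := by
          have := abs_real_inner_le_norm tP dP'
          have := neg_abs_le ⟪tP, dP'⟫
          linarith [abs_real_inner_le_norm tP dP']
        have hexpand : ⟪s + tP, d⟫ = ⟪s, dM'⟫ + ⟪s, dP'⟫ + ⟪tP, dM'⟫ + ⟪tP, dP'⟫ := by
          rw [hdeq, inner_add_left, inner_add_right, inner_add_right]
          ring
        rw [hexpand, e1, e2]
        have hnn : 0 ≤ ‖dP'‖ := norm_nonneg _
        nlinarith
      have hclA₀ : s + tP ∈ closure A₀ :=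
        mem_closure_dualsum hQc hQconv hQcone hQ0 L hsP
      have h1 : y - s = tM + tP := hteq
      have hyeq : y = (s + tP) + tM := by
        have h2 := sub_eq_iff_eq_add.mp h1
        rw [h2]; abel
      rw [hyeq]
      exact add_mem_closure_add hclA₀ htM
    have hsAhat : s ∈ Ahat := mem_of_ball_subset_closure hAhatconv hrpos hball
    obtain ⟨a, ha, m, hm, heqam⟩ := Set.mem_add.mp hsAhat
    obtain ⟨u, hu, v, hv, hequv⟩ := Set.mem_add.mp ha
    have hm0 : m = 0 := by
      have h1 : ⟪s, m⟫ = 0 := hsM m hm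
      have h2 : ⟪u, m⟫ = 0 := by
        have ha1 := hu m (hMD m hm).1.1
        have ha2 := hu (-m) (hMD m hm).2.1
        rw [inner_neg_right] at ha2
        linarith
      have h3 : ⟪v, m⟫ = 0 := by
        rw [real_inner_comm]
        exact (Submodule.mem_orthogonal _ _).mp hv m (hML hm)
      have h4 : ⟪m, m⟫ = 0 := by
        have : s = u + v + m := by rw [← heqam, ← hequv]
        have hcalc : ⟪s, m⟫ = ⟪u, m⟫ + ⟪v, m⟫ + ⟪m, m⟫ := by
          rw [this, inner_add_left, inner_add_left]
        rw [h1, h2, h3] at hcalc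
        linarith
      exact inner_self_eq_zero.mp h4
    refine ⟨u, v, hu, hv, ?_⟩
    rw [← heqam, ← hequv, hm0, add_zero]

end Chunk6

section Chunk7

lemma lemB [FiniteDimensional ℝ E] {K : Set E}
    (hste : ∀ k : ℕ, ∀ T ∈ TangIter' K k, TangentiallyExposed' T) :
    ∀ (N n : ℕ) (Q : Set E) (hQc : IsClosed Q) (hQconv : Convex ℝ Q) (hQcone : IsConeSet Q)
      (hQ0 : (0:E) ∈ Q), Q ∈ TangIter' K n → K ⊆ Q →
      Module.finrank ℝ E ≤ Module.finrank ℝ (linealSub Q hQconv hQcone hQ0) + N →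
      ∀ (L : Submodule ℝ E), Submodule.span ℝ (Q ∩ (L : Set E)) = L →
      ∀ (s : E), (∀ d ∈ Q ∩ (L : Set E), 0 ≤ ⟪s, d⟫) →
      ∃ u v : E, u ∈ DualCone' Q ∧ v ∈ Lᗮ ∧ s = u + v := by
  intro N
  induction N with
  | zero =>
      intro n Q hQc hQconv hQcone hQ0 hmem hKQ hrank L hspan s hsD
      apply lemBterm hQc hQconv hQcone hQ0 L hspan s hsD
      intro d hd _
      have hle := Submodule.finrank_le (linealSub Q hQconv hQcone hQ0)
      have heq : Module.finrank ℝ (linealSub Q hQconv hQcone hQ0) = Module.finrank ℝ E :=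
        le_antisymm hle (by omega)
      have htop := Submodule.eq_top_of_finrank_eq heq
      have hdm : d ∈ linealSub Q hQconv hQcone hQ0 := by rw [htop]; trivial
      exact hdm.2
  | succ N ihN =>
      intro n Q hQc hQconv hQcone hQ0 hmem hKQ hrank L hspan s hsD
      by_cases hcrit : ∀ d ∈ Q ∩ (L : Set E), ⟪s, d⟫ = 0 → -d ∈ Q
      · exact lemBterm hQc hQconv hQcone hQ0 L hspan s hsD hcrit
      · push_neg at hcrit
        obtain ⟨x, hxD, hsx, hxnQ⟩ := hcrit
        have hxQ : x ∈ Q := hxD.1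
        have hexp : TangentiallyExposed' Q := hste n Q hmem
        set Q' := TangCone x Q with hQ'
        have hQ'c : IsClosed Q' := Aux.tangCone_isClosed
        have hQ'conv : Convex ℝ Q' := Aux.tangCone_convex hQconv hxQ
        have hQ'cone : IsConeSet Q' := Aux.tangCone_cone hQcone
        have hQ'0 : (0:E) ∈ Q' := Aux.zero_mem_tangCone hxQ
        have hQQ' : Q ⊆ Q' := Aux.subset_tangCone hQconv hQcone hxQ
        have hmem' : Q' ∈ TangIter' K (n+1) := ⟨Q, hmem, x, hxQ, rfl⟩
        have hspan' : Submodule.span ℝ (Q' ∩ (L : Set E)) = L := by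
          apply le_antisymm
          · exact Submodule.span_le.mpr Set.inter_subset_right
          · have hmono : Submodule.span ℝ (Q ∩ (L : Set E)) ≤ Submodule.span ℝ (Q' ∩ (L : Set E)) :=
              Submodule.span_mono (Set.inter_subset_inter_left _ hQQ')
            rw [hspan] at hmono
            exact hmono
        have hsD' : ∀ d ∈ Q' ∩ (L : Set E), 0 ≤ ⟪s, d⟫ := by
          intro d hd
          exact lemA hexp (Module.finrank ℝ (Submodule.span ℝ Q)) Q le_rfl (Or.inl rfl)
            hQc hQconv hQcone hQ0 L hspan s hsD x hxD hsx d hd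
        have hrank' : Module.finrank ℝ E ≤
            Module.finrank ℝ (linealSub Q' hQ'conv hQ'cone hQ'0) + N := by
          have hle : linealSub Q hQconv hQcone hQ0 ≤ linealSub Q' hQ'conv hQ'cone hQ'0 :=
            fun v hv => ⟨hQQ' hv.1, hQQ' hv.2⟩
          have hxQ' : x ∈ linealSub Q' hQ'conv hQ'cone hQ'0 :=
            ⟨hQQ' hxQ, subset_closure (Aux.neg_base_mem_feas hQcone hxQ)⟩
          have hlt : linealSub Q hQconv hQcone hQ0 < linealSub Q' hQ'conv hQ'cone hQ'0 := by
            refine lt_of_le_of_ne hle ?_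
            intro h
            rw [← h] at hxQ'
            exact hxnQ hxQ'.2
          have := Submodule.finrank_lt_finrank_of_lt hlt
          omega
        obtain ⟨u, v, hu, hv, heq⟩ := ihN (n+1) Q' hQ'c hQ'conv hQ'cone hQ'0 hmem'
          (hKQ.trans hQQ') hrank' L hspan' s hsD'
        exact ⟨u, v, dualCone_antitone hQQ' hu, hv, heq⟩

theorem main_scratch {E : Type*} [NormedAddCommGroup E] [InnerProductSpace ℝ E]
    [FiniteDimensional ℝ E]
    (K : Set E) (hKclosed : IsClosed K) (hKconv : Convex ℝ K) (hKcone : IsConeSet K)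
    (hste : ∀ k : ℕ, ∀ T ∈ TangIter' K k, TangentiallyExposed' T) :
    ∀ F : Set E, IsProperFaceOf F K → IsClosed (DualCone' K + PerpOf F) := by
  intro F hF
  obtain ⟨hFface, hFne, hFneK⟩ := hF
  obtain ⟨y, hy⟩ := hFne
  have hyK := hFface.1 hy
  have h0K : (0:E) ∈ K := by
    have h1 : Tendsto (fun nn : ℕ => (1:ℝ) / ((nn:ℝ) + 1)) atTop (nhds 0) :=
      tendsto_one_div_add_atTop_nhds_zero_nat
    have htend : Tendsto (fun nn : ℕ => ((1:ℝ) / ((nn:ℝ) + 1)) • y) atTop (nhds (0:E)) := by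
      have := h1.smul_const y
      simpa using this
    refine hKclosed.mem_of_tendsto htend (Filter.Eventually.of_forall fun nn => ?_)
    exact hKcone _ (by positivity) y hyK
  set L := Submodule.span ℝ F with hL
  have hFeq : K ∩ (L : Set E) = F := face_inter_span_eq hKconv hKcone h0K hFface ⟨y, hy⟩
  have hperp : PerpOf F = ((Lᗮ : Submodule ℝ E) : Set E) := perpOf_eq F
  have hmain : DualCone' K + PerpOf F = DualCone' F := by
    apply Set.Subset.antisymm
    · rintro a ⟨u, hu, v, hv, rfl⟩
      intro f hf
      have h1 : 0 ≤ ⟪u, f⟫ := hu f (hFface.1 hf)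
      have h2 : ⟪v, f⟫ = 0 := hv f hf
      rw [inner_add_left]
      linarith
    · intro s hs
      obtain ⟨u, v, hu, hv, heq⟩ := lemB hste (Module.finrank ℝ E) 0 K hKclosed hKconv
        hKcone h0K rfl (subset_refl K) (Nat.le_add_left _ _) L
        (by rw [hFeq]) s
        (by intro d hd; rw [hFeq] at hd; exact hs d hd)
      rw [heq]
      refine Set.add_mem_add hu ?_
      rw [hperp]
      exact hv
  rw [hmain]
  exact dualCone_isClosed F

end Chunk7

lemma tangIter_eq (K : Set E) : ∀ k : ℕ, TangIter' K k = TangIter K k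
  | 0 => rfl
  | (k+1) => by
      show TangFamily' (TangIter' K k) = TangFamily (TangIter K k)
      rw [tangIter_eq K k]
      rfl

end Aux

/-- **Theorem (sufficient condition).** A strongly tangentially exposed closed convex cone
in a finite-dimensional Euclidean space is facially dual complete. -/
theorem strongly_tangentially_exposed_implies_FDC
    {E : Type*} [NormedAddCommGroup E] [InnerProductSpace ℝ E] [FiniteDimensional ℝ E]
    (K : Set E) (hKclosed : IsClosed K) (hKconv : Convex ℝ K) (hKcone : IsConeSet K)
    (hste : StronglyTangentiallyExposed K) :
    IsFDC K := by
  intro F hF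
  have hste' : ∀ k : ℕ, ∀ T ∈ Aux.TangIter' K k, Aux.TangentiallyExposed' T := by
    intro k T hT
    rw [Aux.tangIter_eq K k] at hT
    exact hste k T hT
  exact Aux.main_scratch K hKclosed hKconv hKcone hste' F hF
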